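/- For every π ∈ S_n and 1 ≤ r < n, the r-th down degree satisfies d_−^{(r)}(π) = d_−^{(r)}(π^{-1}). -/

import Mathlib

open Equiv Finset

/-- Number of inversions (Coxeter length) of a permutation of `Fin n`. -/
def invNum {n : ℕ} (π : Equiv.Perm (Fin n)) : ℕ :=
  (Finset.univ.filter (fun p : Fin n × Fin n => p.1 < p.2 ∧ π p.2 < π p.1)).card

/-- Down degree: number of transpositions `t_{a,b}` with `ℓ(t_{a,b} π) = ℓ(π) - 1`. -/
def downDeg {n : ℕ} (π : Equiv.Perm (Fin n)) : ℕ :=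
  (Finset.univ.filter (fun p : Fin n × Fin n =>
    p.1 < p.2 ∧ invNum (Equiv.swap p.1 p.2 * π) + 1 = invNum π)).card

/-- Total degree: number of transpositions `t_{a,b}` with `ℓ(t_{a,b} π) = ℓ(π) ± 1`. -/
def totalDeg {n : ℕ} (π : Equiv.Perm (Fin n)) : ℕ :=
  (Finset.univ.filter (fun p : Fin n × Fin n =>
    p.1 < p.2 ∧ (invNum (Equiv.swap p.1 p.2 * π) + 1 = invNum π ∨
      invNum (Equiv.swap p.1 p.2 * π) = invNum π + 1))).card


/-- The r-th down degree of π. -/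
def rDownDeg {n : ℕ} (r : ℕ) (π : Equiv.Perm (Fin n)) : ℕ :=
  (Finset.univ.filter (fun p : Fin n × Fin n => p.1 < p.2 ∧
    invNum (Equiv.swap p.1 p.2 * π) < invNum π ∧
    invNum π < invNum (Equiv.swap p.1 p.2 * π) + 2 * r)).card

lemma invNum_inv {n : ℕ} (π : Equiv.Perm (Fin n)) : invNum π⁻¹ = invNum π := by
  unfold invNum
  apply Finset.card_bij (fun p _ => (π⁻¹ p.2, π⁻¹ p.1))
  · intro p hp
    simp only [mem_filter, mem_univ, true_and] at hp ⊢
    exact ⟨hp.2, by simpa using hp.1⟩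
  · intro p hp q hq h
    simp only [Prod.ext_iff] at h ⊢
    exact ⟨π⁻¹.injective h.2, π⁻¹.injective h.1⟩
  · intro q hq
    simp only [mem_filter, mem_univ, true_and] at hq
    exact ⟨(π q.2, π q.1), by simp [hq.1, hq.2], by simp⟩

lemma invNum_key {n : ℕ} (π : Equiv.Perm (Fin n)) (a b : Fin n) :
    invNum (Equiv.swap (π⁻¹ a) (π⁻¹ b) * π⁻¹) = invNum (Equiv.swap a b * π) := by
  have h : Equiv.swap (π⁻¹ a) (π⁻¹ b) * π⁻¹ = (Equiv.swap a b * π)⁻¹ := by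
    rw [Equiv.swap_apply_apply, mul_inv_rev, Equiv.swap_inv]
    group
  rw [h, invNum_inv]

theorem rDownDeg_inv {n r : ℕ} (hr : 1 ≤ r) (hrn : r < n) (π : Equiv.Perm (Fin n)) :
    rDownDeg r π = rDownDeg r π⁻¹ := by
  unfold rDownDeg
  have key' : ∀ a b : Fin n,
      invNum (Equiv.swap (π a) (π b) * π) = invNum (Equiv.swap a b * π⁻¹) := by
    intro a b
    have := invNum_key π⁻¹ a b
    simpa using this
  apply Finset.card_bij (fun p _ =>
    if π⁻¹ p.1 < π⁻¹ p.2 then (π⁻¹ p.1, π⁻¹ p.2) else (π⁻¹ p.2, π⁻¹ p.1))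
  · intro p hp
    simp only [mem_filter, mem_univ, true_and] at hp
    obtain ⟨h1, h2, h3⟩ := hp
    have hne : π⁻¹ p.1 ≠ π⁻¹ p.2 := fun h => absurd (π⁻¹.injective h) h1.ne
    have hk : invNum (Equiv.swap (π⁻¹ p.1) (π⁻¹ p.2) * π⁻¹) =
        invNum (Equiv.swap p.1 p.2 * π) := invNum_key π p.1 p.2
    split_ifs with h
    · simp only [mem_filter, mem_univ, true_and]
      exact ⟨h, by rw [hk, invNum_inv]; exact h2, by rw [invNum_inv, hk]; exact h3⟩
    · simp only [mem_filter, mem_univ, true_and]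
      refine ⟨lt_of_le_of_ne (not_lt.mp h) hne.symm, ?_, ?_⟩
      · rw [Equiv.swap_comm, hk, invNum_inv]; exact h2
      · rw [Equiv.swap_comm, invNum_inv, hk]; exact h3
  · intro p hp q hq h
    simp only [mem_filter, mem_univ, true_and] at hp hq
    split_ifs at h with h1 h2 h2 <;> simp only [Prod.ext_iff] at h ⊢
    · exact ⟨π⁻¹.injective h.1, π⁻¹.injective h.2⟩
    · have e1 : p.1 = q.2 := π⁻¹.injective h.1
      have e2 : p.2 = q.1 := π⁻¹.injective h.2
      exact absurd hp.1 (by rw [e1, e2]; exact hq.1.asymm)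
    · have e1 : p.2 = q.1 := π⁻¹.injective h.1
      have e2 : p.1 = q.2 := π⁻¹.injective h.2
      exact absurd hp.1 (by rw [e1, e2]; exact hq.1.asymm)
    · exact ⟨π⁻¹.injective h.2, π⁻¹.injective h.1⟩
  · intro q hq
    simp only [mem_filter, mem_univ, true_and] at hq
    obtain ⟨h1, h2, h3⟩ := hq
    by_cases h : π q.1 < π q.2
    · refine ⟨(π q.1, π q.2), ?_, ?_⟩
      · simp only [mem_filter, mem_univ, true_and]
        exact ⟨h, by rw [key', ← invNum_inv π]; exact h2, by rw [← invNum_inv π, key']; exact h3⟩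
      · simp [Equiv.Perm.inv_def, h1]
    · have hne : π q.1 ≠ π q.2 := fun hh => absurd (π.injective hh) h1.ne
      have h' : π q.2 < π q.1 := lt_of_le_of_ne (not_lt.mp h) (Ne.symm hne)
      refine ⟨(π q.2, π q.1), ?_, ?_⟩
      · simp only [mem_filter, mem_univ, true_and]
        refine ⟨h', ?_, ?_⟩
        · rw [Equiv.swap_comm, key', ← invNum_inv π]; exact h2
        · rw [Equiv.swap_comm, ← invNum_inv π, key']; exact h3
      · simp [Equiv.Perm.inv_def, h1.asymm]
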